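/- arXiv:2208.13256 — 4 statements merged into one kernel-verified Lean document; each statement's English description precedes it below -/
import Mathlib

section
/- Let J be a nonempty finite index set, y : J → ℝ with yⱼ ≥ 0 for all j, and let Γ be a real number with 0 ≤ Γ ≤ |J|. Then sup { Σⱼ uⱼ yⱼ : u : J → ℝ, 0 ≤ uⱼ ≤ 1 for all j, Σⱼ uⱼ ≤ Γ } equals the sum of the ⌊Γ⌋ largest values among (yⱼ)ⱼ∈J plus (Γ − ⌊Γ⌋) times the (⌊Γ⌋+1)-st largest value (where the (⌊Γ⌋+1)-st largest value is taken to be 0 if ⌊Γ⌋ = |J|). In particular, the supremum is attained. -/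
open Finset in
private lemma abel_sum (V W : ℕ → ℝ) (n : ℕ) :
    ∑ i ∈ Finset.range n, V i * W i
      = (∑ m ∈ Finset.range n, (∑ i ∈ Finset.range (m+1), V i) * (W m - W (m+1)))
        + (∑ i ∈ Finset.range n, V i) * W n := by
  induction n with
  | zero => simp
  | succ n ih =>
      rw [Finset.sum_range_succ (f := fun i => V i * W i),
        Finset.sum_range_succ (f := fun m => (∑ i ∈ Finset.range (m+1), V i) * (W m - W (m+1))),
        Finset.sum_range_succ (f := V), ih]
      ring

/-- The greedy solution of the budgeted LP, as a function on `ℕ`. -/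
noncomputable def greedyV (Γ : ℝ) : ℕ → ℝ :=
  fun i => if i < ⌊Γ⌋₊ then 1 else if i = ⌊Γ⌋₊ then Γ - ⌊Γ⌋₊ else 0

lemma greedyV_nonneg (Γ : ℝ) (hΓ0 : 0 ≤ Γ) (i : ℕ) : 0 ≤ greedyV Γ i := by
  have h1 : (⌊Γ⌋₊ : ℝ) ≤ Γ := Nat.floor_le hΓ0
  unfold greedyV
  split
  · exact zero_le_one
  · split
    · linarith
    · exact le_refl 0

lemma greedyV_le_one (Γ : ℝ) (i : ℕ) : greedyV Γ i ≤ 1 := by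
  have h2 : Γ < (⌊Γ⌋₊ : ℝ) + 1 := Nat.lt_floor_add_one Γ
  unfold greedyV
  split
  · exact le_refl 1
  · split
    · linarith
    · exact zero_le_one

lemma greedyV_partial (Γ : ℝ) (hΓ0 : 0 ≤ Γ) (m : ℕ) :
    ∑ i ∈ Finset.range m, greedyV Γ i = min (m : ℝ) Γ := by
  have hkΓ : (⌊Γ⌋₊ : ℝ) ≤ Γ := Nat.floor_le hΓ0
  have hΓk1 : Γ < (⌊Γ⌋₊ : ℝ) + 1 := Nat.lt_floor_add_one Γ
  induction m with
  | zero => simp [min_eq_left hΓ0]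
  | succ m ih =>
      rw [Finset.sum_range_succ, ih]
      have hm1 : ((m + 1 : ℕ) : ℝ) = (m : ℝ) + 1 := by push_cast; ring
      rcases lt_trichotomy m ⌊Γ⌋₊ with hm | hm | hm
      · have hmk : (m : ℝ) + 1 ≤ (⌊Γ⌋₊ : ℝ) := by exact_mod_cast hm
        have h1 : (m : ℝ) ≤ Γ := by linarith
        have h2 : ((m + 1 : ℕ) : ℝ) ≤ Γ := by rw [hm1]; linarith
        rw [min_eq_left h1, min_eq_left h2, hm1]
        unfold greedyV
        rw [if_pos hm]
      · have hmr : (m : ℝ) = (⌊Γ⌋₊ : ℝ) := by exact_mod_cast hm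
        have h1 : (m : ℝ) ≤ Γ := by rw [hmr]; exact hkΓ
        have h2 : Γ ≤ ((m + 1 : ℕ) : ℝ) := by rw [hm1, hmr]; linarith
        rw [min_eq_left h1, min_eq_right h2]
        unfold greedyV
        rw [if_neg (by omega), if_pos hm, hmr]
        ring
      · have hmk : (⌊Γ⌋₊ : ℝ) + 1 ≤ (m : ℝ) := by exact_mod_cast hm
        have h1 : Γ ≤ (m : ℝ) := by linarith
        have h2 : Γ ≤ ((m + 1 : ℕ) : ℝ) := by rw [hm1]; linarith
        rw [min_eq_right h1, min_eq_right h2]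
        unfold greedyV
        rw [if_neg (by omega), if_neg (by omega)]
        ring

/-- Core comparison: any feasible solution is dominated by the greedy one. -/
lemma greedy_opt (n : ℕ) (Γ : ℝ) (hΓ0 : 0 ≤ Γ)
    (W : ℕ → ℝ) (hWanti : ∀ i j : ℕ, i ≤ j → W j ≤ W i) (hWn : W n = 0)
    (V : ℕ → ℝ) (hV0 : ∀ i, 0 ≤ V i) (hV1 : ∀ i, V i ≤ 1)
    (hVsum : ∑ i ∈ Finset.range n, V i ≤ Γ) :
    ∑ i ∈ Finset.range n, V i * W i ≤ ∑ i ∈ Finset.range n, greedyV Γ i * W i := by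
  rw [abel_sum V W n, abel_sum (greedyV Γ) W n, hWn, mul_zero, mul_zero, add_zero, add_zero]
  apply Finset.sum_le_sum
  intro m hm
  have hmn := Finset.mem_range.mp hm
  have hD : 0 ≤ W m - W (m + 1) := by linarith [hWanti m (m+1) (by omega)]
  apply mul_le_mul_of_nonneg_right _ hD
  rw [greedyV_partial Γ hΓ0 (m+1)]
  apply le_min
  · have : ∑ i ∈ Finset.range (m+1), V i ≤ ∑ i ∈ Finset.range (m+1), (1 : ℝ) :=
      Finset.sum_le_sum (fun i _ => hV1 i)
    simpa using this
  · calc ∑ i ∈ Finset.range (m+1), V i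
        ≤ ∑ i ∈ Finset.range n, V i := by
          apply Finset.sum_le_sum_of_subset_of_nonneg
          · exact Finset.range_subset_range.mpr (by omega)
          · intro i _ _; exact hV0 i
      _ ≤ Γ := hVsum

/-- Bertsimas–Sim protection function: for nonnegative weights `y` over a
nonempty finite index set `J` and a budget `Γ ∈ [0, |J|]`, the value
`max { ∑ j, u j * y j : 0 ≤ u ≤ 1, ∑ j, u j ≤ Γ }` equals the sum of the
`⌊Γ⌋` largest values of `y` plus `(Γ - ⌊Γ⌋)` times the `(⌊Γ⌋+1)`-st largest
value (taken to be `0` when `⌊Γ⌋ = |J|`); in particular the supremum is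
attained.  The decreasing ordering of the values of `y` is encoded by an
equivalence `e : Fin |J| ≃ J` along which `y` is antitone. -/
theorem protection_function_value
    (J : Type) [Fintype J] [Nonempty J] (y : J → ℝ) (hy : ∀ j, 0 ≤ y j)
    (Γ : ℝ) (hΓ0 : 0 ≤ Γ) (hΓ : Γ ≤ (Fintype.card J : ℝ))
    (e : Fin (Fintype.card J) ≃ J)
    (he : ∀ i i' : Fin (Fintype.card J), i ≤ i' → y (e i') ≤ y (e i)) :
    IsGreatest
      { s : ℝ | ∃ u : J → ℝ, (∀ j, 0 ≤ u j ∧ u j ≤ 1) ∧ (∑ j, u j) ≤ Γ ∧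
          s = ∑ j, u j * y j }
      ((∑ i : Fin (Fintype.card J), if (i : ℕ) < ⌊Γ⌋₊ then y (e i) else 0) +
        (Γ - ⌊Γ⌋₊) *
          (if h : ⌊Γ⌋₊ < Fintype.card J then y (e ⟨⌊Γ⌋₊, h⟩) else 0)) := by
  have hkΓ : ((⌊Γ⌋₊ : ℕ) : ℝ) ≤ Γ := Nat.floor_le hΓ0
  have hΓk1 : Γ < ((⌊Γ⌋₊ : ℕ) : ℝ) + 1 := Nat.lt_floor_add_one Γ
  have hkn : ⌊Γ⌋₊ ≤ Fintype.card J := by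
    have := Nat.floor_le_floor (R := ℝ) hΓ
    simpa using this
  -- the antitone extension of `y ∘ e` to `ℕ`, zero past `n`
  set W : ℕ → ℝ := fun i => if h : i < Fintype.card J then y (e ⟨i, h⟩) else 0 with hWdef
  have hW0 : ∀ i, 0 ≤ W i := by
    intro i; simp only [hWdef]; split
    · exact hy _
    · exact le_refl 0
  have hWanti : ∀ i j : ℕ, i ≤ j → W j ≤ W i := by
    intro i j hij
    simp only [hWdef]
    by_cases hj : j < Fintype.card J
    · have hi : i < Fintype.card J := lt_of_le_of_lt hij hj
      rw [dif_pos hj, dif_pos hi]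
      exact he ⟨i, hi⟩ ⟨j, hj⟩ hij
    · rw [dif_neg hj]
      split
      · exact hy _
      · exact le_refl 0
  have hWn : W (Fintype.card J) = 0 := by simp [hWdef]
  -- transfer of sums over `J` to sums over `range n`
  have htrans : ∀ f : J → ℝ,
      ∑ j, f j = ∑ i ∈ Finset.range (Fintype.card J),
        (if h : i < Fintype.card J then f (e ⟨i, h⟩) else 0) := by
    intro f
    rw [← Equiv.sum_comp e f]
    rw [← Fin.sum_univ_eq_sum_range
      (fun i => if h : i < Fintype.card J then f (e ⟨i, h⟩) else 0) (Fintype.card J)]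
    apply Finset.sum_congr rfl
    intro i _
    rw [dif_pos i.isLt]
  -- the target value as a range sum
  have hTarget :
      ((∑ i : Fin (Fintype.card J), if (i : ℕ) < ⌊Γ⌋₊ then y (e i) else 0) +
        (Γ - ⌊Γ⌋₊) * (if h : ⌊Γ⌋₊ < Fintype.card J then y (e ⟨⌊Γ⌋₊, h⟩) else 0))
      = ∑ i ∈ Finset.range (Fintype.card J), greedyV Γ i * W i := by
    have h1 : (∑ i : Fin (Fintype.card J), if (i : ℕ) < ⌊Γ⌋₊ then y (e i) else 0)
        = ∑ i ∈ Finset.range (Fintype.card J), (if i < ⌊Γ⌋₊ then W i else 0) := by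
      rw [← Fin.sum_univ_eq_sum_range (fun i => if i < ⌊Γ⌋₊ then W i else 0) (Fintype.card J)]
      apply Finset.sum_congr rfl
      intro i _
      simp only [hWdef, dif_pos i.isLt]
    have h2 : (Γ - (⌊Γ⌋₊ : ℝ)) * (if h : ⌊Γ⌋₊ < Fintype.card J then y (e ⟨⌊Γ⌋₊, h⟩) else 0)
        = (Γ - ⌊Γ⌋₊) * W ⌊Γ⌋₊ := by
      simp [hWdef]
    rw [h1, h2]
    have h3 : ∀ i ∈ Finset.range (Fintype.card J),
        greedyV Γ i * W i
          = (if i < ⌊Γ⌋₊ then W i else 0) + (if i = ⌊Γ⌋₊ then (Γ - ⌊Γ⌋₊) * W i else 0) := by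
      intro i _
      unfold greedyV
      rcases lt_trichotomy i ⌊Γ⌋₊ with h | h | h
      · rw [if_pos h, if_pos h, if_neg (by omega), one_mul, add_zero]
      · rw [if_neg (by omega), if_pos h, if_neg (by omega), if_pos h, zero_add]
      · rw [if_neg (by omega), if_neg (by omega), if_neg (by omega), if_neg (by omega),
          zero_mul, add_zero]
    rw [Finset.sum_congr rfl h3, Finset.sum_add_distrib]
    congr 1
    rw [Finset.sum_ite_eq' (Finset.range (Fintype.card J)) ⌊Γ⌋₊
      (fun i => (Γ - (⌊Γ⌋₊ : ℝ)) * W i)]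
    by_cases hkn' : ⌊Γ⌋₊ < Fintype.card J
    · simp [hkn']
    · have hkeq : ⌊Γ⌋₊ = Fintype.card J := by omega
      simp [hkn', hkeq, hWn]
  constructor
  · -- membership: the greedy `u`
    refine ⟨fun j => greedyV Γ (e.symm j), ?_, ?_, ?_⟩
    · intro j; exact ⟨greedyV_nonneg Γ hΓ0 _, greedyV_le_one Γ _⟩
    · have h4 : ∑ j, greedyV Γ (e.symm j)
          = ∑ i ∈ Finset.range (Fintype.card J), greedyV Γ i := by
        rw [htrans (fun j => greedyV Γ (e.symm j))]
        apply Finset.sum_congr rfl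
        intro i hi
        rw [dif_pos (Finset.mem_range.mp hi), Equiv.symm_apply_apply]
      rw [h4, greedyV_partial Γ hΓ0]
      exact min_le_right _ _
    · rw [htrans (fun j => greedyV Γ (e.symm j) * y j), hTarget]
      apply Finset.sum_congr rfl
      intro i hi
      have hi' := Finset.mem_range.mp hi
      rw [dif_pos hi', Equiv.symm_apply_apply]
      simp [hWdef, hi']
  · -- upper bound
    rintro s ⟨u, hu, husum, rfl⟩
    set V : ℕ → ℝ := fun i => if h : i < Fintype.card J then u (e ⟨i, h⟩) else 0 with hVdef
    have hV0 : ∀ i, 0 ≤ V i := by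
      intro i; simp only [hVdef]; split
      · exact (hu _).1
      · exact le_refl 0
    have hV1 : ∀ i, V i ≤ 1 := by
      intro i; simp only [hVdef]; split
      · exact (hu _).2
      · exact zero_le_one
    have hVsum : ∑ i ∈ Finset.range (Fintype.card J), V i ≤ Γ := by
      have h5 : ∑ j, u j = ∑ i ∈ Finset.range (Fintype.card J), V i := htrans u
      linarith [husum, h5.symm.le]
    have hs : ∑ j, u j * y j = ∑ i ∈ Finset.range (Fintype.card J), V i * W i := by
      rw [htrans (fun j => u j * y j)]
      apply Finset.sum_congr rfl
      intro i hi
      have hi' := Finset.mem_range.mp hi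
      simp [hVdef, hWdef, hi']
    rw [hs, hTarget]
    exact greedy_opt (Fintype.card J) Γ hΓ0 W hWanti hWn V hV0 hV1 hVsum
end

section
/- Let J be a finite index set, y : J → ℝ with yⱼ ≥ 0 for all j, and Γ ≥ 0 a real number. Then max { Σⱼ uⱼ yⱼ : u : J → ℝ, 0 ≤ uⱼ ≤ 1 for all j, Σⱼ uⱼ ≤ Γ } = inf { z·Γ + Σⱼ pⱼ : z ∈ ℝ, p : J → ℝ, z ≥ 0, pⱼ ≥ 0 and z + pⱼ ≥ yⱼ for all j }, and the infimum is attained (e.g., by taking z equal to a suitable value among {0} ∪ {yⱼ} and pⱼ = max(yⱼ − z, 0)). -/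
/-- Weak duality for the protection function LP. -/
lemma protection_weak_duality {J : Type} [Fintype J] (y u p : J → ℝ) (z Γ : ℝ)
    (hz : 0 ≤ z) (hu : ∀ j, 0 ≤ u j ∧ u j ≤ 1) (hsum : ∑ j, u j ≤ Γ)
    (hp : ∀ j, 0 ≤ p j ∧ y j ≤ z + p j) :
    ∑ j, u j * y j ≤ z * Γ + ∑ j, p j := by
  calc ∑ j, u j * y j ≤ ∑ j, u j * (z + p j) :=
        Finset.sum_le_sum fun j _ => mul_le_mul_of_nonneg_left (hp j).2 (hu j).1
    _ = z * ∑ j, u j + ∑ j, u j * p j := by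
        rw [Finset.mul_sum, ← Finset.sum_add_distrib]; congr 1; ext j; ring
    _ ≤ z * Γ + ∑ j, p j := by
        refine add_le_add (mul_le_mul_of_nonneg_left hsum hz)
          (Finset.sum_le_sum fun j _ => ?_)
        nlinarith [(hu j).1, (hu j).2, (hp j).1]

/-- Existence of a "top-k" subset. -/
lemma exists_top_subset {J : Type} [DecidableEq J] (y : J → ℝ) :
    ∀ (k : ℕ) (s : Finset J), k ≤ s.card →
      ∃ A ⊆ s, A.card = k ∧ ∀ a ∈ A, ∀ b ∈ s, b ∉ A → y b ≤ y a := by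
  intro k
  induction k with
  | zero => intro s _; exact ⟨∅, Finset.empty_subset s, rfl, by simp⟩
  | succ k ih =>
    intro s hk
    have hne : s.Nonempty := Finset.card_pos.mp (by omega)
    obtain ⟨a, ha, hmax⟩ := Finset.exists_max_image s y hne
    obtain ⟨A', hA's, hcard, htop⟩ := ih (s.erase a)
      (by rw [Finset.card_erase_of_mem ha]; omega)
    have haA' : a ∉ A' := fun h => (Finset.mem_erase.mp (hA's h)).1 rfl
    refine ⟨insert a A', ?_, ?_, ?_⟩
    · exact Finset.insert_subset ha (hA's.trans (Finset.erase_subset ..))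
    · rw [Finset.card_insert_of_notMem haA', hcard]
    · intro x hx b hb hbA
      rcases Finset.mem_insert.mp hx with rfl | hx'
      · exact hmax b hb
      · exact htop x hx' b
          (Finset.mem_erase.mpr ⟨fun h => hbA (h ▸ Finset.mem_insert_self a A'), hb⟩)
          (fun h => hbA (Finset.mem_insert_of_mem h))

/-- Strong LP duality for the Bertsimas–Sim protection function:
`max { ∑ j, u j * y j : 0 ≤ u ≤ 1, ∑ j, u j ≤ Γ }`
equals
`min { z * Γ + ∑ j, p j : z ≥ 0, p j ≥ 0, z + p j ≥ y j }`,
and both the maximum and the minimum are attained. -/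
theorem protection_function_duality
    (J : Type) [Fintype J] (y : J → ℝ) (hy : ∀ j, 0 ≤ y j)
    (Γ : ℝ) (hΓ : 0 ≤ Γ) :
    ∃ M : ℝ,
      IsGreatest
        { s : ℝ | ∃ u : J → ℝ, (∀ j, 0 ≤ u j ∧ u j ≤ 1) ∧ (∑ j, u j) ≤ Γ ∧
            s = ∑ j, u j * y j } M ∧
      IsLeast
        { s : ℝ | ∃ (z : ℝ) (p : J → ℝ), 0 ≤ z ∧
            (∀ j, 0 ≤ p j ∧ y j ≤ z + p j) ∧
            s = z * Γ + ∑ j, p j } M := by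
  classical
  by_cases hcard : (Fintype.card J : ℝ) ≤ Γ
  · -- everything fits in the budget
    refine ⟨∑ j, y j, ⟨⟨fun _ => 1, fun j => ⟨zero_le_one, le_refl 1⟩,
        by simpa using hcard, by simp⟩, ?_⟩,
      ⟨⟨0, y, le_refl 0, fun j => ⟨hy j, by simp⟩, by simp⟩, ?_⟩⟩
    · rintro s ⟨u, hu, hsum, rfl⟩
      refine Finset.sum_le_sum fun j _ => ?_
      nlinarith [(hu j).1, (hu j).2, hy j]
    · rintro s ⟨z, p, hz, hp, rfl⟩
      have := protection_weak_duality y (fun _ => 1) p z Γ hz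
        (fun j => ⟨zero_le_one, le_refl 1⟩) (by simpa using hcard) hp
      simpa using this
  · -- budget binds: Γ < card J
    push_neg at hcard
    set k : ℕ := ⌊Γ⌋₊ with hk
    have hkΓ : (k : ℝ) ≤ Γ := Nat.floor_le hΓ
    have hΓk : Γ < (k : ℝ) + 1 := Nat.lt_floor_add_one Γ
    have hkcard : k + 1 ≤ Fintype.card J := by
      have : k < Fintype.card J := by
        have := hkΓ.trans_lt hcard
        exact_mod_cast this
      omega
    obtain ⟨A, -, hAcard, htop⟩ := exists_top_subset y (k + 1) Finset.univ
      (by simpa using hkcard)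
    have hAne : A.Nonempty := Finset.card_pos.mp (by omega)
    obtain ⟨j0, hj0A, hmin⟩ := Finset.exists_min_image A y hAne
    set z : ℝ := y j0 with hzdef
    set A' : Finset J := A.erase j0 with hA'
    have hj0A' : j0 ∉ A' := Finset.notMem_erase j0 A
    have hA'card : A'.card = k := by
      rw [hA', Finset.card_erase_of_mem hj0A, hAcard]; omega
    have hA'z : ∀ j ∈ A', z ≤ y j := fun j hj => hmin j (Finset.mem_of_mem_erase hj)
    have houtz : ∀ j, j ∉ A → y j ≤ z := fun j hj =>
      htop j0 hj0A j (Finset.mem_univ j) hj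
    set θ : ℝ := Γ - k with hθ
    have hθ0 : 0 ≤ θ := by simp [hθ]; linarith
    have hθ1 : θ ≤ 1 := by simp [hθ]; linarith
    set u : J → ℝ := fun j => (if j ∈ A' then (1:ℝ) else 0) + (if j = j0 then θ else 0)
      with hu
    set p : J → ℝ := fun j => max (y j - z) 0 with hp
    have hsumu : ∑ j, u j = Γ := by
      rw [hu]
      simp only [Finset.sum_add_distrib]
      rw [Finset.sum_ite_mem, Finset.univ_inter, Finset.sum_const,
        Finset.sum_ite_eq' Finset.univ j0 (fun _ => θ)]
      simp [hA'card, hθ]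
    have hval : ∑ j, u j * y j = (∑ j ∈ A', y j) + θ * z := by
      rw [hu]
      have : ∀ j, ((if j ∈ A' then (1:ℝ) else 0) + (if j = j0 then θ else 0)) * y j
          = (if j ∈ A' then y j else 0) + (if j = j0 then θ * y j0 else 0) := by
        intro j
        by_cases h2 : j = j0
        · subst h2; simp [hj0A']
        · by_cases h1 : j ∈ A' <;> simp [h1, h2]
      rw [Finset.sum_congr rfl fun j _ => this j]
      rw [Finset.sum_add_distrib, Finset.sum_ite_mem, Finset.univ_inter,
        Finset.sum_ite_eq' Finset.univ j0 (fun _ => θ * y j0)]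
      simp [hzdef]
    have hsump : ∑ j, p j = (∑ j ∈ A', y j) - k * z := by
      have h1 : ∑ j, p j = ∑ j ∈ A', p j := by
        refine (Finset.sum_subset (Finset.subset_univ A') ?_).symm
        intro j _ hj
        have : y j ≤ z := by
          by_cases hjA : j ∈ A
          · have : j = j0 := by
              by_contra hne
              exact hj (Finset.mem_erase.mpr ⟨hne, hjA⟩)
            simp [this, hzdef]
          · exact houtz j hjA
        simp [hp, max_eq_right, sub_nonpos.mpr this]
      have h2 : ∀ j ∈ A', p j = y j - z := fun j hj => by
        simp [hp, max_eq_left, sub_nonneg.mpr (hA'z j hj)]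
      rw [h1, Finset.sum_congr rfl h2, Finset.sum_sub_distrib, Finset.sum_const,
        hA'card, nsmul_eq_mul]
    have hz0 : 0 ≤ z := hy j0
    have hufeas : ∀ j, 0 ≤ u j ∧ u j ≤ 1 := by
      intro j
      rw [hu]
      by_cases h2 : j = j0
      · subst h2; simp [hj0A']; exact ⟨hθ0, hθ1⟩
      · by_cases h1 : j ∈ A' <;> simp [h1, h2]
    have hpfeas : ∀ j, 0 ≤ p j ∧ y j ≤ z + p j := by
      intro j
      refine ⟨le_max_right _ _, ?_⟩
      rw [hp]
      have := le_max_left (y j - z) (0:ℝ)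
      dsimp only
      linarith
    refine ⟨(∑ j ∈ A', y j) + θ * z, ⟨⟨u, hufeas, le_of_eq hsumu, hval.symm⟩, ?_⟩,
      ⟨⟨z, p, hz0, hpfeas, ?_⟩, ?_⟩⟩
    · -- greatest: weak duality against the dual point (z, p)
      rintro s ⟨u', hu', hsum', rfl⟩
      have := protection_weak_duality y u' p z Γ hz0 hu' hsum' hpfeas
      rw [hsump] at this
      have hΓeq : Γ = (k : ℝ) + θ := by simp [hθ]
      nlinarith [this]
    · rw [hsump]
      have hΓeq : Γ = (k : ℝ) + θ := by simp [hθ]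
      rw [hΓeq]; ring
    · rintro s ⟨z', p', hz', hp', rfl⟩
      have := protection_weak_duality y u p' z' Γ hz' hufeas (le_of_eq hsumu) hp'
      rw [hval] at this; exact this
end

section
/- Let n be a natural number, x, a, â ∈ ℝⁿ with âⱼ ≥ 0 for all j, b ∈ ℝ, and 0 ≤ Γ ≤ n. Then x satisfies Σⱼ (aⱼ + ηⱼ âⱼ) xⱼ ≤ b for every deviation vector η ∈ ℝⁿ with |ηⱼ| ≤ 1 for all j and Σⱼ |ηⱼ| ≤ Γ, if and only if Σⱼ aⱼ xⱼ + β(x, Γ) ≤ b, where β(x, Γ) := max { Σⱼ uⱼ âⱼ |xⱼ| : u ∈ ℝⁿ, 0 ≤ uⱼ ≤ 1 for all j, Σⱼ uⱼ ≤ Γ }. -/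
/-- Bertsimas–Sim budgeted-uncertainty robust counterpart: `x` satisfies
`∑ j, (a j + η j * ahat j) * x j ≤ b` for every deviation vector `η` with
`|η j| ≤ 1` and `∑ j, |η j| ≤ Γ`, iff `∑ j, a j * x j + β ≤ b`, where
`β = β(x, Γ)` is the protection function
`max { ∑ j, u j * (ahat j * |x j|) : 0 ≤ u ≤ 1, ∑ j, u j ≤ Γ }`. -/
theorem budgeted_uncertainty_robust_counterpart
    (n : ℕ) (x a ahat : Fin n → ℝ) (hahat : ∀ j, 0 ≤ ahat j) (b : ℝ)
    (Γ : ℝ) (hΓ0 : 0 ≤ Γ) (hΓn : Γ ≤ (n : ℝ)) (β : ℝ)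
    (hβ : IsGreatest
      { s : ℝ | ∃ u : Fin n → ℝ, (∀ j, 0 ≤ u j ∧ u j ≤ 1) ∧ (∑ j, u j) ≤ Γ ∧
          s = ∑ j, u j * (ahat j * |x j|) } β) :
    (∀ η : Fin n → ℝ, (∀ j, |η j| ≤ 1) → (∑ j, |η j|) ≤ Γ →
        ∑ j, (a j + η j * ahat j) * x j ≤ b) ↔
      ∑ j, a j * x j + β ≤ b := by
  obtain ⟨⟨u, hu01, huΓ, huβ⟩, hub⟩ := hβ
  constructor
  · intro h
    -- use η j = u j * sign (x j)
    set η : Fin n → ℝ := fun j => u j * Real.sign (x j) with hη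
    have hsign : ∀ j, |η j| ≤ u j := by
      intro j
      have : |Real.sign (x j)| ≤ 1 := by
        rcases lt_trichotomy (x j) 0 with h' | h' | h'
        · simp [Real.sign_of_neg h']
        · simp [h']
        · simp [Real.sign_of_pos h']
      calc |η j| = |u j| * |Real.sign (x j)| := abs_mul _ _
        _ ≤ |u j| * 1 := by
            exact mul_le_mul_of_nonneg_left this (abs_nonneg _)
        _ = u j := by rw [mul_one, abs_of_nonneg (hu01 j).1]
    have hηx : ∀ j, η j * x j = u j * |x j| := by
      intro j
      show u j * Real.sign (x j) * x j = u j * |x j|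
      rcases lt_trichotomy (x j) 0 with h' | h' | h'
      · rw [Real.sign_of_neg h', abs_of_neg h']; ring
      · simp [h']
      · rw [Real.sign_of_pos h', abs_of_pos h']; ring
    have key := h η (fun j => (hsign j).trans (hu01 j).2)
      (le_trans (Finset.sum_le_sum fun j _ => hsign j) huΓ)
    calc ∑ j, a j * x j + β = ∑ j, (a j + η j * ahat j) * x j := by
          rw [huβ, ← Finset.sum_add_distrib]
          refine Finset.sum_congr rfl fun j _ => ?_
          linear_combination -ahat j * hηx j
      _ ≤ b := key
  · intro h η hη1 hηΓ
    have hmem : (∑ j, |η j| * (ahat j * |x j|)) ∈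
        { s : ℝ | ∃ u : Fin n → ℝ, (∀ j, 0 ≤ u j ∧ u j ≤ 1) ∧ (∑ j, u j) ≤ Γ ∧
          s = ∑ j, u j * (ahat j * |x j|) } :=
      ⟨fun j => |η j|, fun j => ⟨abs_nonneg _, hη1 j⟩, hηΓ, rfl⟩
    have hle := hub hmem
    have hterm : ∀ j, η j * ahat j * x j ≤ |η j| * (ahat j * |x j|) := by
      intro j
      calc η j * ahat j * x j ≤ |η j * ahat j * x j| := le_abs_self _
        _ = |η j| * (ahat j * |x j|) := by
            rw [abs_mul, abs_mul, abs_of_nonneg (hahat j)]; ring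
    calc ∑ j, (a j + η j * ahat j) * x j
        = ∑ j, a j * x j + ∑ j, η j * ahat j * x j := by
          rw [← Finset.sum_add_distrib]
          exact Finset.sum_congr rfl fun j _ => by ring
      _ ≤ ∑ j, a j * x j + β :=
          add_le_add_right (le_trans (Finset.sum_le_sum fun j _ => hterm j) hle) _
      _ ≤ b := h
end

section
/- Let n be a natural number, c, ĉ ∈ ℝⁿ with ĉⱼ ≥ 0 for all j, 0 ≤ Γ₀ ≤ n, and x ∈ ℝⁿ. Define the robust objective F(x) := Σⱼ cⱼ xⱼ + max { Σⱼ uⱼ ĉⱼ |xⱼ| : 0 ≤ u ≤ 1, Σⱼ uⱼ ≤ Γ₀ }. Then F(x) = min { Σⱼ cⱼ xⱼ + z·Γ₀ + Σⱼ p₀ⱼ : z ≥ 0, p₀ⱼ ≥ 0, yⱼ ≥ 0, −yⱼ ≤ xⱼ ≤ yⱼ, and z + p₀ⱼ ≥ ĉⱼ yⱼ for all j }, and consequently Σⱼ cⱼ xⱼ ≤ F(x) ≤ Σⱼ cⱼ xⱼ + Σⱼ ĉⱼ |xⱼ|. -/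
/-- The Bertsimas–Sim robust objective
`F(x) = ∑ j, c j * x j + max { ∑ j, u j * (chat j * |x j|) : 0 ≤ u ≤ 1, ∑ u ≤ Γ₀ }`
equals the minimum of its exact linearization
`∑ j, c j * x j + z * Γ₀ + ∑ j, p₀ j` over `z ≥ 0`, `p₀ ≥ 0`, `y ≥ 0` with
`-y j ≤ x j ≤ y j` and `z + p₀ j ≥ chat j * y j` (the minimum being attained),
and it lies between the nominal objective `∑ j, c j * x j` and the fully
protected Soyster objective `∑ j, c j * x j + ∑ j, chat j * |x j|`. -/
theorem robust_objective_linearization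
    (n : ℕ) (c chat : Fin n → ℝ) (hchat : ∀ j, 0 ≤ chat j)
    (Γ₀ : ℝ) (hΓ0 : 0 ≤ Γ₀) (hΓn : Γ₀ ≤ (n : ℝ)) (x : Fin n → ℝ)
    (β F : ℝ)
    (hβ : IsGreatest
      { s : ℝ | ∃ u : Fin n → ℝ, (∀ j, 0 ≤ u j ∧ u j ≤ 1) ∧ (∑ j, u j) ≤ Γ₀ ∧
          s = ∑ j, u j * (chat j * |x j|) } β)
    (hF : F = ∑ j, c j * x j + β) :
    IsLeast
      { s : ℝ | ∃ (z : ℝ) (p₀ y : Fin n → ℝ), 0 ≤ z ∧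
          (∀ j, 0 ≤ p₀ j ∧ 0 ≤ y j ∧ -y j ≤ x j ∧ x j ≤ y j ∧
            chat j * y j ≤ z + p₀ j) ∧
          s = ∑ j, c j * x j + z * Γ₀ + ∑ j, p₀ j } F ∧
    (∑ j, c j * x j ≤ F ∧ F ≤ ∑ j, c j * x j + ∑ j, chat j * |x j|) := by
  obtain ⟨⟨u₀, hu₀b, hu₀s, hu₀v⟩, hub⟩ := hβ
  set a : Fin n → ℝ := fun j => chat j * |x j| with ha
  have ha0 : ∀ j, 0 ≤ a j := fun j => mul_nonneg (hchat j) (abs_nonneg _)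
  -- weak duality
  have weak : ∀ (z : ℝ) (p₀ y : Fin n → ℝ), 0 ≤ z →
      (∀ j, 0 ≤ p₀ j ∧ 0 ≤ y j ∧ -y j ≤ x j ∧ x j ≤ y j ∧ chat j * y j ≤ z + p₀ j) →
      β ≤ z * Γ₀ + ∑ j, p₀ j := by
    intro z p₀ y hz hfeas
    have h2 : ∀ j, u₀ j * a j ≤ u₀ j * z + p₀ j := by
      intro j
      obtain ⟨hp, hy, hxl, hxr, hc⟩ := hfeas j
      have habs : |x j| ≤ y j := abs_le.2 ⟨by linarith, hxr⟩
      have h1 : a j ≤ chat j * y j := mul_le_mul_of_nonneg_left habs (hchat j)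
      have h3 : u₀ j * a j ≤ u₀ j * (z + p₀ j) :=
        mul_le_mul_of_nonneg_left (h1.trans hc) (hu₀b j).1
      nlinarith [(hu₀b j).1, (hu₀b j).2]
    calc β = ∑ j, u₀ j * a j := hu₀v
      _ ≤ ∑ j, (u₀ j * z + p₀ j) := Finset.sum_le_sum (fun j _ => h2 j)
      _ = (∑ j, u₀ j) * z + ∑ j, p₀ j := by
          rw [Finset.sum_add_distrib, ← Finset.sum_mul]
      _ ≤ z * Γ₀ + ∑ j, p₀ j := by nlinarith
  -- attainment
  have mem : ∃ (z : ℝ) (p₀ y : Fin n → ℝ), 0 ≤ z ∧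
      (∀ j, 0 ≤ p₀ j ∧ 0 ≤ y j ∧ -y j ≤ x j ∧ x j ≤ y j ∧ chat j * y j ≤ z + p₀ j) ∧
      z * Γ₀ + ∑ j, p₀ j = β := by
    rcases le_or_gt (n : ℝ) Γ₀ with hn | hn
    · -- Γ₀ = n : full protection
      refine ⟨0, a, fun j => |x j|, le_refl 0, ?_, ?_⟩
      · intro j
        exact ⟨ha0 j, abs_nonneg _, neg_abs_le _, le_abs_self _, by simp [ha]⟩
      · have hle : ∑ j, a j ≤ β := by
          apply hub
          refine ⟨fun _ => 1, fun j => ⟨zero_le_one, le_refl 1⟩, by simpa using hn, by simp [ha]⟩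
        have hge : β ≤ 0 * Γ₀ + ∑ j, a j :=
          weak 0 a (fun j => |x j|) (le_refl 0)
            (fun j => ⟨ha0 j, abs_nonneg _, neg_abs_le _, le_abs_self _, by simp [ha]⟩)
        have : β = ∑ j, a j := le_antisymm (by linarith) hle
        linarith
    · -- Γ₀ < n
      set k : ℕ := ⌊Γ₀⌋₊ with hkdef
      have hkle : (k : ℝ) ≤ Γ₀ := Nat.floor_le hΓ0
      have hklt : Γ₀ < (k : ℝ) + 1 := Nat.lt_floor_add_one Γ₀
      have hkn : k < n := by exact_mod_cast lt_of_le_of_lt hkle hn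
      set σ : Equiv.Perm (Fin n) := (Fin.revPerm).trans (Tuple.sort a) with hσ
      set b : Fin n → ℝ := fun i => a (σ i) with hb
      have hbanti : ∀ i j : Fin n, i ≤ j → b j ≤ b i := by
        intro i j hij
        have := Tuple.monotone_sort a (Fin.rev_le_rev.2 hij)
        simpa [hb, hσ, Equiv.trans_apply] using this
      set k0 : Fin n := ⟨k, hkn⟩ with hk0
      set z : ℝ := b k0 with hz
      have hz0 : 0 ≤ z := ha0 _
      set f : ℝ := Γ₀ - k with hf
      have hf0 : 0 ≤ f := by simp [hf]; linarith
      have hf1 : f ≤ 1 := by simp [hf]; linarith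
      set p₀ : Fin n → ℝ := fun j => max (a j - z) 0 with hp₀
      have hfeas : ∀ j, 0 ≤ p₀ j ∧ 0 ≤ |x j| ∧ -|x j| ≤ x j ∧ x j ≤ |x j| ∧
          chat j * |x j| ≤ z + p₀ j := by
        intro j
        refine ⟨le_max_right _ _, abs_nonneg _, neg_abs_le _, le_abs_self _, ?_⟩
        have h1 : a j - z ≤ max (a j - z) 0 := le_max_left _ _
        have h2 : a j = chat j * |x j| := rfl
        simp only [hp₀]
        linarith
      -- generic splitting lemma
      have hIio : Finset.univ.filter (fun i : Fin n => i < k0) = Finset.Iio k0 := by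
        ext i; simp
      have hcard : (Finset.Iio k0).card = k := by
        rw [Fin.card_Iio]
      have hsplit : ∀ (g : Fin n → ℝ) (w : ℝ),
          ∑ i, (if i < k0 then g i else if i = k0 then w else 0)
            = (∑ i ∈ Finset.Iio k0, g i) + w := by
        intro g w
        have heach : ∀ i : Fin n, (if i < k0 then g i else if i = k0 then w else 0)
            = (if i < k0 then g i else 0) + (if i = k0 then w else 0) := by
          intro i
          rcases lt_trichotomy i k0 with h | h | h
          · simp [h, ne_of_lt h]
          · simp [h]
          · simp [not_lt_of_gt h, ne_of_gt h]
        rw [Finset.sum_congr rfl (fun i _ => heach i), Finset.sum_add_distrib,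
          Finset.sum_ite_eq' Finset.univ k0 (fun _ => w), ← Finset.sum_filter, hIio]
        simp
      -- the optimal primal solution
      set v : Fin n → ℝ := fun i => if i < k0 then 1 else if i = k0 then f else 0 with hv
      set u : Fin n → ℝ := fun j => v (σ.symm j) with hu
      have husum : ∑ j, u j = Γ₀ := by
        have h1 : ∑ j, u j = ∑ i, v i := by
          rw [← Equiv.sum_comp σ u]
          simp [hu]
        rw [h1, hsplit (fun _ => 1) f]
        simp [hcard, hf]
      have huval : ∑ j, u j * a j = (∑ i ∈ Finset.Iio k0, b i) + f * z := by
        have h1 : ∑ j, u j * a j = ∑ i, v i * b i := by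
          rw [← Equiv.sum_comp σ (fun j => u j * a j)]
          simp [hu, hb]
        rw [h1]
        have h2 : ∀ i : Fin n, v i * b i
            = if i < k0 then b i else if i = k0 then f * z else 0 := by
          intro i
          rcases lt_trichotomy i k0 with h | h | h
          · simp [hv, h, ne_of_lt h]
          · simp [hv, h, hz]
          · simp [hv, not_lt_of_gt h, ne_of_gt h]
        rw [Finset.sum_congr rfl (fun i _ => h2 i), hsplit]
      have hubd : ∀ i : Fin n, 0 ≤ v i ∧ v i ≤ 1 := by
        intro i
        rcases lt_trichotomy i k0 with h | h | h
        · simp [hv, h]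
        · simp [hv, h]; exact ⟨hf0, hf1⟩
        · simp [hv, not_lt_of_gt h, ne_of_gt h]
      -- dual objective value
      have hpsum : ∑ j, p₀ j = (∑ i ∈ Finset.Iio k0, b i) - k * z := by
        have h1 : ∑ j, p₀ j = ∑ i, max (b i - z) 0 := by
          rw [← Equiv.sum_comp σ p₀]
        have h2 : ∀ i : Fin n, max (b i - z) 0
            = if i < k0 then b i - z else if i = k0 then 0 else 0 := by
          intro i
          rcases lt_trichotomy i k0 with h | h | h
          · simp only [if_pos h]
            exact max_eq_left (by linarith [hbanti i k0 (le_of_lt h)])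
          · simp [h, hz]
          · simp only [if_neg (not_lt_of_gt h), if_neg (ne_of_gt h)]
            exact max_eq_right (by linarith [hbanti k0 i (le_of_lt h)])
        rw [h1, Finset.sum_congr rfl (fun i _ => h2 i), hsplit,
          Finset.sum_sub_distrib, Finset.sum_const, hcard]
        push_cast
        ring
      refine ⟨z, p₀, fun j => |x j|, hz0, hfeas, ?_⟩
      have hle : (∑ i ∈ Finset.Iio k0, b i) + f * z ≤ β := by
        apply hub
        exact ⟨u, fun j => hubd (σ.symm j), le_of_eq husum, (huval.symm)⟩
      have hge : β ≤ z * Γ₀ + ∑ j, p₀ j := weak z p₀ (fun j => |x j|) hz0 hfeas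
      have : z * Γ₀ + ∑ j, p₀ j = (∑ i ∈ Finset.Iio k0, b i) + f * z := by
        rw [hpsum, hf]; ring
      linarith
  obtain ⟨z, p₀, y, hz0, hfeas, hval⟩ := mem
  have hβ0 : 0 ≤ β := by
    have h0mem : (0 : ℝ) ∈ { s : ℝ | ∃ u : Fin n → ℝ, (∀ j, 0 ≤ u j ∧ u j ≤ 1) ∧
        (∑ j, u j) ≤ Γ₀ ∧ s = ∑ j, u j * (chat j * |x j|) } :=
      ⟨fun _ => 0, fun j => ⟨le_refl 0, zero_le_one⟩, by simpa using hΓ0, by simp⟩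
    exact hub h0mem
  have hβtop : β ≤ ∑ j, a j := by
    rw [hu₀v]
    exact Finset.sum_le_sum fun j _ => mul_le_of_le_one_left (ha0 j) (hu₀b j).2
  have hmemF : F = ∑ j, c j * x j + z * Γ₀ + ∑ j, p₀ j := by
    rw [hF]; linarith [hval]
  have hlb : ∀ s ∈ { s : ℝ | ∃ (z : ℝ) (p₀ y : Fin n → ℝ), 0 ≤ z ∧
      (∀ j, 0 ≤ p₀ j ∧ 0 ≤ y j ∧ -y j ≤ x j ∧ x j ≤ y j ∧
        chat j * y j ≤ z + p₀ j) ∧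
      s = ∑ j, c j * x j + z * Γ₀ + ∑ j, p₀ j }, F ≤ s := by
    rintro s ⟨z', p₀', y', hz0', hfeas', rfl⟩
    have := weak z' p₀' y' hz0' hfeas'
    rw [hF]; linarith
  exact ⟨⟨⟨z, p₀, y, hz0, hfeas, hmemF⟩, hlb⟩, by linarith, by rw [hF]; linarith [hβtop]⟩
end
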